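/- Let I ⊆ ℝ be an open interval, φ : I → ℝ twice differentiable with φ(I) = (0,∞), φ' < 0, and φ'' > 0 on I. Suppose that for all N ≥ 1, all p, v ∈ (0,∞)^N and x ∈ I^N, the function g(s) = φ⁻¹(Σ_n p_n φ(x_n + v_n s)) is concave on its domain (a neighborhood of 0). Then there exist a > −1, b ∈ ℝ, and c > 0 with I = {x : a x + b > 0} such that φ(x) = c(ax+b)^{−1/a} if a ≠ 0, and φ(x) = c e^{−x/b} (with b > 0, I = ℝ) if a = 0. -/

import Mathlib

open Set Filter Topology

lemma helper_deriv_nonpos_of_antitoneOn {W : ℝ → ℝ} {U : Set ℝ} {d : ℝ}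
    (hU : U ∈ 𝓝 (0:ℝ)) (hA : AntitoneOn W U) (hW : HasDerivAt W d 0) : d ≤ 0 := by
  have h0 : (0:ℝ) ∈ U := mem_of_mem_nhds hU
  have ht : Tendsto (slope W 0) (𝓝[>] (0:ℝ)) (𝓝 d) :=
    (hasDerivAt_iff_tendsto_slope.mp hW).mono_left
      (nhdsWithin_mono _ (fun s hs => ne_of_gt hs))
  refine le_of_tendsto ht ?_
  filter_upwards [self_mem_nhdsWithin, mem_nhdsWithin_of_mem_nhds hU] with s hs hsU
  have h1 : W s ≤ W 0 := hA h0 hsU (le_of_lt hs)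
  rw [slope_def_field]
  apply div_nonpos_of_nonpos_of_nonneg (by linarith)
  simp [le_of_lt (show (0:ℝ) < s from hs)]

lemma helper_eq_of_hasDerivAt_zero {s : Set ℝ} (ho : IsOpen s) (hc : Convex ℝ s)
    {f : ℝ → ℝ} (hf : ∀ x ∈ s, HasDerivAt f 0 x) :
    ∀ x ∈ s, ∀ y ∈ s, f x = f y := by
  have hdo : DifferentiableOn ℝ f (interior s) := by
    rw [ho.interior_eq]; exact fun x hx => ((hf x hx).differentiableAt).differentiableWithinAt
  have hcont : ContinuousOn f s := fun x hx =>
    ((hf x hx).differentiableAt.continuousAt).continuousWithinAt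
  have hz : ∀ x ∈ interior s, deriv f x = 0 := by
    rw [ho.interior_eq]; exact fun x hx => (hf x hx).deriv
  have hm := monotoneOn_of_deriv_nonneg hc hcont hdo (fun x hx => (hz x hx).ge)
  have ha := antitoneOn_of_deriv_nonpos hc hcont hdo (fun x hx => (hz x hx).le)
  intro x hx y hy
  rcases le_total x y with h | h
  · exact le_antisymm (hm hx hy h) (ha hx hy h)
  · exact le_antisymm (ha hy hx h) (hm hy hx h)

lemma helper_convex_side {I : Set ℝ} (hIc : Convex ℝ I) {y : ℝ} (hy : y ∉ I) :
    (∀ x ∈ I, x < y) ∨ (∀ x ∈ I, y < x) := by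
  by_contra h
  push_neg at h
  obtain ⟨⟨x1, hx1, hx1y⟩, ⟨x2, hx2, hx2y⟩⟩ := h
  exact hy (hIc.ordConnected.out hx2 hx1 ⟨hx2y, hx1y⟩)

theorem hara_keyA (I : Set ℝ) (hIo : IsOpen I) (hIc : Convex ℝ I)
    (φ : ℝ → ℝ)
    (himg : φ '' I = Set.Ioi 0)
    (hdiff : ∀ x ∈ I, DifferentiableAt ℝ φ x ∧ DifferentiableAt ℝ (deriv φ) x)
    (hd1 : ∀ x ∈ I, deriv φ x < 0)
    (hd2 : ∀ x ∈ I, 0 < deriv (deriv φ) x)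
    (φinv : ℝ → ℝ)
    (hinv : ∀ x ∈ I, φinv (φ x) = x)
    (hconc : ∀ (N : ℕ), 0 < N → ∀ p v x : Fin N → ℝ,
      (∀ n, 0 < p n) → (∀ n, 0 < v n) → (∀ n, x n ∈ I) →
      ConcaveOn ℝ {s : ℝ | ∀ n, x n + v n * s ∈ I}
        (fun s => φinv (∑ n, p n * φ (x n + v n * s)))) :
    ∀ x ∈ I, ∀ u ∈ I,
      φ u * (deriv φ x)^2 * deriv (deriv φ) u ≤ φ x * deriv (deriv φ) x * (deriv φ u)^2 := by
  have hpos : ∀ x ∈ I, 0 < φ x := fun x hx => by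
    have : φ x ∈ φ '' I := ⟨x, hx, rfl⟩
    rw [himg] at this; exact this
  have hsurj : ∀ y : ℝ, 0 < y → ∃ x ∈ I, φ x = y := fun y hy => by
    have : y ∈ φ '' I := by rw [himg]; exact hy
    obtain ⟨x, hx, hxy⟩ := this; exact ⟨x, hx, hxy⟩
  have hanti : StrictAntiOn φ I := strictAntiOn_of_deriv_neg hIc
    (fun z hz => (hdiff z hz).1.continuousAt.continuousWithinAt)
    (by rw [hIo.interior_eq]; exact hd1)
  -- φ is C¹ on I
  have hC1 : ContDiffOn ℝ 1 φ I := by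
    have h := (contDiffOn_succ_iff_deriv_of_isOpen (n := 0) hIo).mpr
      ⟨fun x hx => (hdiff x hx).1.differentiableWithinAt, by simp, by
        rw [contDiffOn_zero]
        exact fun x hx => (hdiff x hx).2.continuousAt.continuousWithinAt⟩
    simpa using h
  have hstrict : ∀ z ∈ I, HasStrictDerivAt φ (deriv φ z) z := fun z hz =>
    (hC1.contDiffAt (hIo.mem_nhds hz)).hasStrictDerivAt one_ne_zero
  have hφinv : ∀ z ∈ I, HasDerivAt φinv (deriv φ z)⁻¹ (φ z) := fun z hz =>
    ((hstrict z hz).to_local_left_inverse (hd1 z hz).ne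
      (eventually_of_mem (hIo.mem_nhds hz) hinv)).hasDerivAt
  intro x hx u hu
  have hφx := hpos x hx
  have hφu := hpos u hu
  set p : ℝ := φ u / φ x with hpdef
  have hp0 : 0 < p := div_pos hφu hφx
  have hpφ : p * φ x = φ u := div_mul_cancel₀ _ (ne_of_gt hφx)
  set U : Set ℝ := {s : ℝ | x + s ∈ I} with hUdef
  have hUo : IsOpen U := hIo.preimage (by continuity)
  have hU0 : (0:ℝ) ∈ U := by simp only [hUdef, mem_setOf_eq, add_zero]; exact hx
  set w : ℝ → ℝ := fun s => φinv (p * φ (x + s)) with hwdef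
  have hcw : ConcaveOn ℝ U w := by
    have hc := hconc 1 one_pos (fun _ => p) (fun _ => 1) (fun _ => x)
      (fun _ => hp0) (fun _ => one_pos) (fun _ => hx)
    simpa using hc
  have hwmem : ∀ s ∈ U, w s ∈ I ∧ φ (w s) = p * φ (x + s) := by
    intro s hs
    obtain ⟨t, ht, hφt⟩ := hsurj (p * φ (x + s)) (mul_pos hp0 (hpos _ hs))
    have hwt : w s = t := by rw [hwdef]; simp only; rw [← hφt, hinv t ht]
    rw [hwt, ← hφt]; exact ⟨ht, rfl⟩
  have hwderiv : ∀ s ∈ U, HasDerivAt w (p * deriv φ (x + s) / deriv φ (w s)) s := by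
    intro s hs
    have hxs : x + s ∈ I := hs
    obtain ⟨hws, hφws⟩ := hwmem s hs
    have h1 : HasDerivAt (fun s : ℝ => x + s) 1 s := (hasDerivAt_id s).const_add x
    have h2 := ((hdiff _ hxs).1.hasDerivAt).comp s h1
    have hinner : HasDerivAt (fun s => p * φ (x + s)) (p * deriv φ (x + s)) s := by
      simpa [Function.comp] using h2.const_mul p
    have houter := hφinv (w s) hws
    rw [hφws] at houter
    have hcomp := houter.comp s hinner
    have heq : p * deriv φ (x + s) / deriv φ (w s)
        = (deriv φ (w s))⁻¹ * (p * deriv φ (x + s)) := by rw [div_eq_inv_mul]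
    rw [heq]
    exact hcomp
  -- w 0 = u when p = φ u / φ x
  obtain ⟨hu0I, hφu0⟩ := hwmem 0 hU0
  have hu0u : w 0 = u := by
    apply hanti.injOn hu0I hu
    rw [hφu0, add_zero, hpφ]
  rw [hu0u] at hu0I hφu0
  set W : ℝ → ℝ := fun s => p * deriv φ (x + s) / deriv φ (w s) with hWdef
  have hWanti : AntitoneOn W U := by
    have h1 := hcw.antitoneOn_deriv (fun s hs => (hwderiv s hs).differentiableAt)
    intro s1 h1' s2 h2' h12
    have e1 : deriv w s1 = W s1 := (hwderiv s1 h1').deriv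
    have e2 : deriv w s2 = W s2 := (hwderiv s2 h2').deriv
    rw [← e1, ← e2]
    exact h1 h1' h2' h12
  have hw0 : HasDerivAt w (W 0) 0 := hwderiv 0 hU0
  have hnum : HasDerivAt (fun s => p * deriv φ (x + s)) (p * deriv (deriv φ) x) 0 := by
    have h1 : HasDerivAt (fun s : ℝ => x + s) 1 0 := (hasDerivAt_id 0).const_add x
    have h0 : HasDerivAt (deriv φ) (deriv (deriv φ) x) ((fun s : ℝ => x + s) 0) := by
      simpa using (hdiff x hx).2.hasDerivAt
    have h2 := h0.comp 0 h1
    simpa [Function.comp] using h2.const_mul p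
  have hden : HasDerivAt (fun s => deriv φ (w s)) (deriv (deriv φ) u * W 0) 0 := by
    have h0 : HasDerivAt (deriv φ) (deriv (deriv φ) u) (w 0) := by
      rw [hu0u]; exact (hdiff u hu).2.hasDerivAt
    exact h0.comp 0 hw0
  have hdu : deriv φ u ≠ 0 := (hd1 u hu).ne
  have hWd := hnum.div hden (by rw [hu0u]; exact hdu)
  have hd0 := helper_deriv_nonpos_of_antitoneOn (hUo.mem_nhds hU0) hWanti hWd
  have hW0 : W 0 = p * deriv φ x / deriv φ u := by
    rw [hWdef]; simp only [add_zero, hu0u]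
  simp only [add_zero, hu0u] at hd0
  rw [hW0] at hd0
  have hC : deriv φ u < 0 := hd1 u hu
  have hC2 : 0 < deriv φ u ^ 2 := by positivity
  have hnumle : p * deriv (deriv φ) x * deriv φ u
      - p * deriv φ x * (deriv (deriv φ) u * (p * deriv φ x / deriv φ u)) ≤ 0 := by
    rcases div_nonpos_iff.mp hd0 with ⟨h1, h2⟩ | ⟨h1, h2⟩
    · nlinarith
    · exact h1
  have hkey : p * (deriv (deriv φ) x * deriv φ u ^ 2 - p * deriv φ x ^ 2 * deriv (deriv φ) u)
      = (p * deriv (deriv φ) x * deriv φ u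
        - p * deriv φ x * (deriv (deriv φ) u * (p * deriv φ x / deriv φ u))) * deriv φ u := by
    field_simp
  have h3 : 0 ≤ p * (deriv (deriv φ) x * deriv φ u ^ 2 - p * deriv φ x ^ 2 * deriv (deriv φ) u) := by
    rw [hkey]; nlinarith [hnumle, hC]
  have h4 : p * deriv φ x ^ 2 * deriv (deriv φ) u ≤ deriv (deriv φ) x * deriv φ u ^ 2 := by
    nlinarith
  have h6 : φ u * deriv φ x ^ 2 * deriv (deriv φ) u
      = φ x * (p * deriv φ x ^ 2 * deriv (deriv φ) u) := by rw [← hpφ]; ring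
  have h5 := mul_le_mul_of_nonneg_left h4 hφx.le
  rw [h6]
  nlinarith [h5]

theorem hara_necessity (I : Set ℝ) (hIo : IsOpen I) (hIc : Convex ℝ I)
    (φ : ℝ → ℝ)
    (himg : φ '' I = Set.Ioi 0)
    (hdiff : ∀ x ∈ I, DifferentiableAt ℝ φ x ∧ DifferentiableAt ℝ (deriv φ) x)
    (hd1 : ∀ x ∈ I, deriv φ x < 0)
    (hd2 : ∀ x ∈ I, 0 < deriv (deriv φ) x)
    (φinv : ℝ → ℝ)
    (hinv : ∀ x ∈ I, φinv (φ x) = x)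
    (hconc : ∀ (N : ℕ), 0 < N → ∀ p v x : Fin N → ℝ,
      (∀ n, 0 < p n) → (∀ n, 0 < v n) → (∀ n, x n ∈ I) →
      ConcaveOn ℝ {s : ℝ | ∀ n, x n + v n * s ∈ I}
        (fun s => φinv (∑ n, p n * φ (x n + v n * s)))) :
    ∃ a > (-1:ℝ), ∃ b : ℝ, ∃ c > (0:ℝ),
      I = {x : ℝ | 0 < a * x + b} ∧
      (a ≠ 0 → ∀ x ∈ I, φ x = c * (a * x + b) ^ (-1/a)) ∧
      (a = 0 → 0 < b ∧ ∀ x ∈ I, φ x = c * Real.exp (-x / b)) := by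
  have keyA := hara_keyA I hIo hIc φ himg hdiff hd1 hd2 φinv hinv hconc
  have hpos : ∀ x ∈ I, 0 < φ x := fun x hx => by
    have : φ x ∈ φ '' I := ⟨x, hx, rfl⟩
    rw [himg] at this; exact this
  have hsurj : ∀ y : ℝ, 0 < y → ∃ x ∈ I, φ x = y := fun y hy => by
    have : y ∈ φ '' I := by rw [himg]; exact hy
    obtain ⟨x, hx, hxy⟩ := this; exact ⟨x, hx, hxy⟩
  obtain ⟨x₀, hx₀, -⟩ := hsurj 1 one_pos
  have hEq : ∀ z ∈ I, φ z * (deriv φ x₀)^2 * deriv (deriv φ) z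
      = φ x₀ * deriv (deriv φ) x₀ * (deriv φ z)^2 := by
    intro z hz
    have h1 := keyA x₀ hx₀ z hz
    have h2 := keyA z hz x₀ hx₀
    nlinarith [h1, h2]
  set K := (deriv φ x₀)^2 / (φ x₀ * deriv (deriv φ) x₀) with hKdef
  have hBx₀ : deriv φ x₀ < 0 := hd1 x₀ hx₀
  have hsq : 0 < (deriv φ x₀)^2 := by nlinarith [hBx₀]
  have hK : 0 < K := div_pos hsq (mul_pos (hpos x₀ hx₀) (hd2 x₀ hx₀))
  have hODE : ∀ z ∈ I, deriv φ z ^ 2 = K * (φ z * deriv (deriv φ) z) := by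
    intro z hz
    have h := hEq z hz
    rw [hKdef]
    have hne1 : φ x₀ ≠ 0 := (hpos x₀ hx₀).ne'
    have hne2 : deriv (deriv φ) x₀ ≠ 0 := (hd2 x₀ hx₀).ne'
    field_simp
    linarith [h]
  set a := 1/K - 1 with hadef
  have ha : -1 < a := by
    have h01 : 0 < 1/K := by positivity
    rw [hadef]; linarith
  have hG : ∀ z ∈ I, HasDerivAt (fun z => φ z / deriv φ z) (-a) z := by
    intro z hz
    have hBz : deriv φ z ≠ 0 := (hd1 z hz).ne
    have h := ((hdiff z hz).1.hasDerivAt).div ((hdiff z hz).2.hasDerivAt) hBz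
    have h' : HasDerivAt (fun z => φ z / deriv φ z) _ z := h
    convert h' using 1
    have hOD := hODE z hz
    have hKne : K ≠ 0 := hK.ne'
    rw [hadef]
    field_simp
    linear_combination -hOD
  set b := -(φ x₀ / deriv φ x₀) - a * x₀ with hbdef
  have hH : ∀ z ∈ I, HasDerivAt (fun z => φ z / deriv φ z + a * z) 0 z := by
    intro z hz
    have h := (hG z hz).add ((hasDerivAt_id z).const_mul a)
    have h' : HasDerivAt (fun z => φ z / deriv φ z + a * z) _ z := h
    simpa using h'
  have hHc := helper_eq_of_hasDerivAt_zero hIo hIc hH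
  have hGb : ∀ z ∈ I, φ z / deriv φ z = -(a * z + b) := by
    intro z hz
    have h : φ z / deriv φ z + a * z = φ x₀ / deriv φ x₀ + a * x₀ := hHc z hz x₀ hx₀
    rw [hbdef]; linarith
  have hposab : ∀ z ∈ I, 0 < a * z + b := by
    intro z hz
    have h := hGb z hz
    have h2 : φ z / deriv φ z < 0 := div_neg_of_pos_of_neg (hpos z hz) (hd1 z hz)
    rw [h] at h2; linarith
  clear_value K a b
  have hφ'rel : ∀ z ∈ I, deriv φ z * (a * z + b) = -φ z := by
    intro z hz
    have hBz : deriv φ z ≠ 0 := (hd1 z hz).ne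
    have h := (div_eq_iff hBz).mp (hGb z hz)
    linear_combination h
  by_cases haz : a = 0
  · -- exponential case
    have hb : 0 < b := by have := hposab x₀ hx₀; rw [haz] at this; linarith
    have hbne : b ≠ 0 := hb.ne'
    set c := φ x₀ * Real.exp (x₀ / b) with hcdef
    have hc : 0 < c := mul_pos (hpos x₀ hx₀) (Real.exp_pos _)
    have hF : ∀ z ∈ I, HasDerivAt (fun z => φ z * Real.exp (z / b)) 0 z := by
      intro z hz
      have hrel : deriv φ z * b = -φ z := by
        have := hφ'rel z hz; rw [haz] at this
        simpa using this
      have hexp : HasDerivAt (fun z : ℝ => Real.exp (z / b)) (Real.exp (z / b) * (1 / b)) z := by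
        have h1 : HasDerivAt (fun z : ℝ => z / b) (1 / b) z := by
          simpa using (hasDerivAt_id z).div_const b
        exact h1.exp
      have h := ((hdiff z hz).1.hasDerivAt).mul hexp
      have h' : HasDerivAt (fun z => φ z * Real.exp (z / b)) _ z := h
      convert h' using 1
      have hexpne : Real.exp (z / b) ≠ 0 := (Real.exp_pos _).ne'
      field_simp
      linear_combination (-(Real.exp (z / b))) * hrel
    have hFc := helper_eq_of_hasDerivAt_zero hIo hIc hF
    have hform : ∀ z ∈ I, φ z = c * Real.exp (-z / b) := by
      intro z hz
      have h : φ z * Real.exp (z / b) = c := hFc z hz x₀ hx₀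
      rw [neg_div, Real.exp_neg, ← h]
      field_simp
    have hIeq : I = {x : ℝ | 0 < a * x + b} := by
      ext y
      simp only [mem_setOf_eq, haz, zero_mul, zero_add]
      constructor
      · intro _; exact hb
      · intro _
        by_contra hyI
        rcases helper_convex_side hIc hyI with hside | hside
        · -- I ⊆ Iio y : φ > c * exp (-y/b) on I, contradiction with surjectivity
          obtain ⟨z, hz, hφz⟩ := hsurj (c * Real.exp (-y / b)) (by positivity)
          have hlt : c * Real.exp (-y / b) < φ z := by
            rw [hform z hz]
            apply mul_lt_mul_of_pos_left _ hc
            apply Real.exp_lt_exp.mpr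
            rw [div_lt_div_iff₀ hb hb]
            nlinarith [hside z hz, hb]
          linarith [hφz ▸ hlt]
        · obtain ⟨z, hz, hφz⟩ := hsurj (c * Real.exp (-y / b)) (by positivity)
          have hlt : φ z < c * Real.exp (-y / b) := by
            rw [hform z hz]
            apply mul_lt_mul_of_pos_left _ hc
            apply Real.exp_lt_exp.mpr
            rw [div_lt_div_iff₀ hb hb]
            nlinarith [hside z hz, hb]
          linarith [hφz ▸ hlt]
    refine ⟨a, ha, b, c, hc, hIeq, fun h => absurd haz h, fun _ => ⟨hb, hform⟩⟩
  · -- power case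
    set c := φ x₀ * (a * x₀ + b) ^ ((1:ℝ)/a) with hcdef
    have hc : 0 < c := mul_pos (hpos x₀ hx₀) (Real.rpow_pos_of_pos (hposab x₀ hx₀) _)
    have hF : ∀ z ∈ I, HasDerivAt (fun z => φ z * (a * z + b) ^ ((1:ℝ)/a)) 0 z := by
      intro z hz
      have ht : 0 < a * z + b := hposab z hz
      have hrel : deriv φ z * (a * z + b) = -φ z := hφ'rel z hz
      have hlin : HasDerivAt (fun z : ℝ => a * z + b) a z := by
        simpa using ((hasDerivAt_id z).const_mul a).add_const b
      have hrp := hlin.rpow_const (p := (1:ℝ)/a) (Or.inl ht.ne')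
      have h := ((hdiff z hz).1.hasDerivAt).mul hrp
      have h' : HasDerivAt (fun z => φ z * (a * z + b) ^ ((1:ℝ)/a)) _ z := h
      convert h' using 1
      have h1 : (a * z + b) ^ ((1:ℝ)/a - 1) = (a * z + b) ^ ((1:ℝ)/a) / (a * z + b) :=
        Real.rpow_sub_one ht.ne' _
      rw [h1]
      field_simp
      linear_combination (-((a * z + b) ^ ((1:ℝ)/a))) * hrel
    have hFc := helper_eq_of_hasDerivAt_zero hIo hIc hF
    have hrpow_cancel : ∀ t : ℝ, 0 < t → t ^ ((1:ℝ)/a) * t ^ (-1/a : ℝ) = 1 := by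
      intro t htp
      rw [← Real.rpow_add htp, show (1:ℝ)/a + -1/a = 0 by ring, Real.rpow_zero]
    have hform : ∀ z ∈ I, φ z = c * (a * z + b) ^ (-1/a : ℝ) := by
      intro z hz
      have h : φ z * (a * z + b) ^ ((1:ℝ)/a) = c := hFc z hz x₀ hx₀
      rw [← h, mul_assoc, hrpow_cancel _ (hposab z hz), mul_one]
    -- strict monotonicity of the model function
    have hmono : ∀ s t : ℝ, 0 < a * s + b → 0 < a * t + b → s < t →
        c * (a * t + b) ^ (-1/a : ℝ) < c * (a * s + b) ^ (-1/a : ℝ) := by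
      intro s t hs ht hst
      apply mul_lt_mul_of_pos_left _ hc
      rcases lt_or_gt_of_ne haz with hneg | hpos'
      · -- a < 0 : exponent -1/a > 0, base decreasing
        have hbase : a * t + b < a * s + b := by nlinarith
        have hexp : 0 < (-1)/a := div_pos_of_neg_of_neg (by norm_num) hneg
        exact Real.rpow_lt_rpow ht.le hbase hexp
      · -- a > 0 : exponent -1/a < 0, base increasing
        have hbase : a * s + b < a * t + b := by nlinarith
        have hexp : (-1)/a < 0 := div_neg_of_neg_of_pos (by norm_num) hpos'
        exact Real.rpow_lt_rpow_of_neg hs hbase hexp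
    have hIeq : I = {x : ℝ | 0 < a * x + b} := by
      ext y
      simp only [mem_setOf_eq]
      refine ⟨hposab y, fun hy => ?_⟩
      by_contra hyI
      rcases helper_convex_side hIc hyI with hside | hside
      · obtain ⟨z, hz, hφz⟩ := hsurj (c * (a * y + b) ^ (-1/a : ℝ))
          (mul_pos hc (Real.rpow_pos_of_pos hy _))
        have hlt := hmono z y (hposab z hz) hy (hside z hz)
        rw [← hform z hz] at hlt
        linarith [hφz ▸ hlt]
      · obtain ⟨z, hz, hφz⟩ := hsurj (c * (a * y + b) ^ (-1/a : ℝ))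
          (mul_pos hc (Real.rpow_pos_of_pos hy _))
        have hlt := hmono y z hy (hposab z hz) (hside z hz)
        rw [← hform z hz] at hlt
        linarith [hφz ▸ hlt]
    exact ⟨a, ha, b, c, hc, hIeq, fun _ => hform, fun h => absurd h haz⟩
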